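/- Let G be an infinite, locally finite, strongly connected, quasi-transitive directed graph. Then the limits μ^F = lim_n (sup_v σ^F_n(v))^{1/n} and μ = lim_n (sup_v σ_n(v))^{1/n} exist and μ^F = μ, where σ^F_n(v) counts forward extendable n-step SAWs from v. -/

import Mathlib

open Filter ENNReal

structure Dgraph where
  V : Type
  E : Type
  src : E → V
  tgt : E → V

namespace Dgraph

variable (G : Dgraph)

/-- Every vertex has finite in-degree and out-degree. -/
def LocallyFinite : Prop :=
  ∀ v : G.V, {e : G.E | G.src e = v}.Finite ∧ {e : G.E | G.tgt e = v}.Finite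

/-- There is a directed edge from `u` to `v`. -/
def Adj (u v : G.V) : Prop := ∃ e : G.E, G.src e = u ∧ G.tgt e = v

/-- Directed walks exist between any ordered pair of vertices. -/
def StronglyConnected : Prop := ∀ u v : G.V, Relation.ReflTransGen G.Adj u v

/-- An automorphism of a directed multigraph. -/
structure Aut where
  vmap : G.V ≃ G.V
  emap : G.E ≃ G.E
  src_eq : ∀ e, G.src (emap e) = vmap (G.src e)
  tgt_eq : ∀ e, G.tgt (emap e) = vmap (G.tgt e)

/-- `u` and `v` are in the same transitivity class. -/
def SameOrbit (u v : G.V) : Prop := ∃ φ : G.Aut, φ.vmap u = v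

/-- Finitely many transitivity classes. -/
def QuasiTransitive : Prop := ∃ S : Finset G.V, ∀ v : G.V, ∃ s ∈ S, G.SameOrbit s v

def VertexTransitive : Prop := ∀ u v : G.V, G.SameOrbit u v

/-- The orbit of `v` under the stabiliser of `u`. -/
def stabOrbit (u v : G.V) : Set G.V := {w | ∃ φ : G.Aut, φ.vmap u = u ∧ φ.vmap v = w}

/-- Unimodularity: the weight function is constant on transitivity classes,
equivalently `|stab(u)v| = |stab(v)u|` whenever `u, v` are in the same orbit. -/
def Unimodular : Prop := ∀ u v : G.V, G.SameOrbit u v →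
  Nat.card (G.stabOrbit u v) = Nat.card (G.stabOrbit v u)

/-- The edge-reversal of `G`. -/
def rev : Dgraph := ⟨G.V, G.E, G.tgt, G.src⟩

/-- Each edge has a reverse edge: `G` represents an undirected graph. -/
def Undirected : Prop := ∃ ι : G.E ≃ G.E, ∀ e : G.E,
  G.src (ι e) = G.tgt e ∧ G.tgt (ι e) = G.src e ∧ ι (ι e) = e

/-- An `n`-step self-avoiding walk starting at `v`, directed away from `v`. -/
@[ext]
structure SAW (n : ℕ) (v : G.V) where
  vs : Fin (n + 1) → G.V
  es : Fin n → G.E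
  hsrc : ∀ i : Fin n, G.src (es i) = vs i.castSucc
  htgt : ∀ i : Fin n, G.tgt (es i) = vs i.succ
  hstart : vs 0 = v
  hinj : Function.Injective vs

/-- `w` is an initial segment of a singly infinite SAW from `v`. -/
def IsFwdExt {n : ℕ} {v : G.V} (w : G.SAW n v) : Prop :=
  ∃ (vs : ℕ → G.V) (es : ℕ → G.E), Function.Injective vs ∧
    (∀ i : ℕ, G.src (es i) = vs i ∧ G.tgt (es i) = vs (i + 1)) ∧
    (∀ i : Fin (n + 1), vs i = w.vs i) ∧ (∀ i : Fin n, es i = w.es i)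

/-- `w` is the final segment of a singly infinite SAW from infinity ending at the
endpoint of `w` (indexed backwards from the endpoint). -/
def IsBwdExt {n : ℕ} {v : G.V} (w : G.SAW n v) : Prop :=
  ∃ (vs : ℕ → G.V) (es : ℕ → G.E), Function.Injective vs ∧
    (∀ i : ℕ, G.src (es i) = vs (i + 1) ∧ G.tgt (es i) = vs i) ∧
    (∀ i : Fin (n + 1), vs (n - (i : ℕ)) = w.vs i) ∧
    (∀ i : Fin n, es (n - 1 - (i : ℕ)) = w.es i)

/-- `w` is a sub-walk of a doubly infinite SAW. -/
def IsDblExt {n : ℕ} {v : G.V} (w : G.SAW n v) : Prop :=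
  ∃ (vs : ℤ → G.V) (es : ℤ → G.E), Function.Injective vs ∧
    (∀ i : ℤ, G.src (es i) = vs i ∧ G.tgt (es i) = vs (i + 1)) ∧
    ∃ k : ℤ, (∀ i : Fin (n + 1), vs (k + (i : ℕ)) = w.vs i) ∧
      (∀ i : Fin n, es (k + (i : ℕ)) = w.es i)

noncomputable def sigma (n : ℕ) (v : G.V) : ℕ := Nat.card (G.SAW n v)
noncomputable def sigmaF (n : ℕ) (v : G.V) : ℕ := Nat.card {w : G.SAW n v // G.IsFwdExt w}
noncomputable def sigmaB (n : ℕ) (v : G.V) : ℕ := Nat.card {w : G.SAW n v // G.IsBwdExt w}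
noncomputable def sigmaFB (n : ℕ) (v : G.V) : ℕ := Nat.card {w : G.SAW n v // G.IsDblExt w}

noncomputable def ssigma (n : ℕ) : ℝ≥0∞ := ⨆ v : G.V, (G.sigma n v : ℝ≥0∞)
noncomputable def ssigmaF (n : ℕ) : ℝ≥0∞ := ⨆ v : G.V, (G.sigmaF n v : ℝ≥0∞)
noncomputable def ssigmaB (n : ℕ) : ℝ≥0∞ := ⨆ v : G.V, (G.sigmaB n v : ℝ≥0∞)
noncomputable def ssigmaFB (n : ℕ) : ℝ≥0∞ := ⨆ v : G.V, (G.sigmaFB n v : ℝ≥0∞)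

/-- Undirected graph distance: length of a shortest path ignoring orientations. -/
noncomputable def udist (u v : G.V) : ℕ :=
  sInf {n : ℕ | ∃ f : Fin (n + 1) → G.V, f 0 = u ∧ f (Fin.last n) = v ∧
    ∀ i : Fin n, (∃ e, G.src e = f i.castSucc ∧ G.tgt e = f i.succ) ∨
      (∃ e, G.src e = f i.succ ∧ G.tgt e = f i.castSucc)}

end Dgraph

open Filter ENNReal

attribute [local instance] Classical.propDecidable


namespace Dgraph

variable {G : Dgraph}

lemma fin_cast_arith {a b : ℕ} (h : a = b) {n : ℕ} (i j : Fin n) (hv : (i : ℕ) = (j : ℕ)) : i = j :=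
  Fin.ext hv

/-- Truncation of a SAW to its first `n` steps. -/
def SAW.truncTo {N n : ℕ} {v : G.V} (W : G.SAW N v) (h : n ≤ N) : G.SAW n v where
  vs i := W.vs (Fin.castLE (by omega) i)
  es i := W.es (Fin.castLE (by omega) i)
  hsrc i := by
    have h1 := W.hsrc (Fin.castLE (by omega) i)
    rw [h1]; exact congrArg W.vs (Fin.ext (by simp))
  htgt i := by
    have h1 := W.htgt (Fin.castLE (by omega) i)
    rw [h1]; exact congrArg W.vs (Fin.ext (by simp))
  hstart := by
    have h2 : (Fin.castLE (show n+1 ≤ N+1 by omega) (0 : Fin (n+1))) = (0 : Fin (N+1)) :=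
      Fin.ext (by simp)
    rw [h2]; exact W.hstart
  hinj := by
    intro i j hij
    exact Fin.castLE_injective _ (W.hinj hij)

@[simp] lemma SAW.truncTo_vs {N n : ℕ} {v : G.V} (W : G.SAW N v) (h : n ≤ N)
    (i : Fin (n+1)) : (W.truncTo h).vs i = W.vs (Fin.castLE (by omega) i) := rfl

@[simp] lemma SAW.truncTo_es {N n : ℕ} {v : G.V} (W : G.SAW N v) (h : n ≤ N)
    (i : Fin n) : (W.truncTo h).es i = W.es (Fin.castLE (by omega) i) := rfl

lemma SAW.truncTo_self {n : ℕ} {v : G.V} (W : G.SAW n v) : W.truncTo le_rfl = W := by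
  ext i <;> simp [Fin.castLE]

lemma SAW.truncTo_truncTo {N n m : ℕ} {v : G.V} (W : G.SAW N v) (h1 : m ≤ n) (h2 : n ≤ N) :
    (W.truncTo h2).truncTo h1 = W.truncTo (h1.trans h2) := by
  ext i <;> rfl

end Dgraph
namespace Dgraph

variable {G : Dgraph}

/-- The suffix of a SAW after its first `n` steps. -/
def SAW.drop {n m : ℕ} {v : G.V} (W : G.SAW (n+m) v) : G.SAW m (W.vs ⟨n, by omega⟩) where
  vs i := W.vs ⟨n + i, by omega⟩
  es i := W.es ⟨n + i, by omega⟩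
  hsrc i := by
    have h1 := W.hsrc ⟨n + i, by omega⟩
    rw [h1]; exact congrArg W.vs (Fin.ext (by simp))
  htgt i := by
    have h1 := W.htgt ⟨n + i, by omega⟩
    rw [h1]; exact congrArg W.vs (Fin.ext (by simp [Fin.val_succ]; omega))
  hstart := by
    exact congrArg W.vs (Fin.ext (by simp))
  hinj := fun i j hij => by
    have h3 : n + (i:ℕ) = n + (j:ℕ) := congrArg Fin.val (W.hinj hij)
    exact Fin.ext (by omega)

@[simp] lemma SAW.drop_vs {n m : ℕ} {v : G.V} (W : G.SAW (n+m) v) (i : Fin (m+1)) :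
    W.drop.vs i = W.vs ⟨n + i, by omega⟩ := rfl

@[simp] lemma SAW.drop_es {n m : ℕ} {v : G.V} (W : G.SAW (n+m) v) (i : Fin m) :
    W.drop.es i = W.es ⟨n + i, by omega⟩ := rfl

lemma saw_finite (hlf : G.LocallyFinite) : ∀ (n : ℕ) (v : G.V), Finite (G.SAW n v) := by
  intro n
  induction n with
  | zero =>
    intro v
    have : Subsingleton (G.SAW 0 v) := by
      constructor
      intro a b
      ext i
      · have hi : i = 0 := Fin.ext (by omega)
        rw [hi, a.hstart, b.hstart]
      · exact i.elim0
    exact Finite.of_subsingleton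
  | succ n IH =>
    intro v
    haveI : Finite (G.SAW n v) := IH v
    haveI : ∀ w : G.SAW n v, Finite {e : G.E // G.src e = w.vs (Fin.last n)} := by
      intro w
      exact ((hlf (w.vs (Fin.last n))).1).to_subtype
    set f : G.SAW (n+1) v → Σ w : G.SAW n v, {e : G.E // G.src e = w.vs (Fin.last n)} :=
      fun W => ⟨W.truncTo (by omega), ⟨W.es (Fin.last n), by
        rw [W.hsrc]; exact congrArg W.vs (Fin.ext (by simp))⟩⟩ with hf
    have hinj : Function.Injective f := by
      intro W W' h
      have h1 : W.truncTo (by omega : n ≤ n + 1) = W'.truncTo (by omega) :=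
        congrArg Sigma.fst h
      have h2 : W.es (Fin.last n) = W'.es (Fin.last n) :=
        congrArg (fun p : (Σ w : G.SAW n v, {e : G.E // G.src e = w.vs (Fin.last n)}) =>
          (p.2 : G.E)) h
      ext i
      · rcases Nat.lt_or_ge (i : ℕ) (n+1) with hi | hi
        · have h3 := congrFun (congrArg SAW.vs h1) ⟨(i:ℕ), hi⟩
          simpa [show Fin.castLE (by omega : n+1 ≤ n+2) ⟨(i:ℕ), hi⟩ = i from Fin.ext (by simp)]
            using h3
        · have hi' : i = (Fin.last n).succ := Fin.ext (by simp; omega)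
          rw [hi', ← W.htgt, ← W'.htgt, h2]
      · rcases Nat.lt_or_ge (i : ℕ) n with hi | hi
        · have h3 := congrFun (congrArg SAW.es h1) ⟨(i:ℕ), hi⟩
          simpa [show Fin.castLE (by omega : n ≤ n+1) ⟨(i:ℕ), hi⟩ = i from Fin.ext (by simp)]
            using h3
        · have hi' : i = Fin.last n := Fin.ext (by simp; omega)
          rw [hi']; exact h2
    exact Finite.of_injective f hinj

/-- Automorphisms transport SAWs. -/
def autSAWequiv (φ : G.Aut) (n : ℕ) (v : G.V) : G.SAW n v ≃ G.SAW n (φ.vmap v) where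
  toFun W :=
    { vs := fun i => φ.vmap (W.vs i)
      es := fun i => φ.emap (W.es i)
      hsrc := fun i => by rw [φ.src_eq, W.hsrc]
      htgt := fun i => by rw [φ.tgt_eq, W.htgt]
      hstart := by rw [W.hstart]
      hinj := fun i j hij => W.hinj (φ.vmap.injective hij) }
  invFun W :=
    { vs := fun i => φ.vmap.symm (W.vs i)
      es := fun i => φ.emap.symm (W.es i)
      hsrc := fun i => by
        apply φ.vmap.injective
        rw [← φ.src_eq, Equiv.apply_symm_apply, Equiv.apply_symm_apply, W.hsrc]
      htgt := fun i => by
        apply φ.vmap.injective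
        rw [← φ.tgt_eq, Equiv.apply_symm_apply, Equiv.apply_symm_apply, W.htgt]
      hstart := by rw [W.hstart, Equiv.symm_apply_apply]
      hinj := fun i j hij => W.hinj (φ.vmap.symm.injective hij) }
  left_inv W := by ext i <;> simp
  right_inv W := by ext i <;> simp

lemma sigma_orbit_eq {s v : G.V} (h : G.SameOrbit s v) (n : ℕ) :
    G.sigma n v = G.sigma n s := by
  obtain ⟨φ, rfl⟩ := h
  exact (Nat.card_eq_of_bijective _ (autSAWequiv φ n s).bijective).symm

end Dgraph
namespace Dgraph

variable {G : Dgraph}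

lemma sigma_le_ssigma (m : ℕ) (u : G.V) : (G.sigma m u : ℝ≥0∞) ≤ G.ssigma m :=
  le_iSup (fun w => ((G.sigma m w : ℝ≥0∞))) u

/-- Master counting lemma: if the `n`-prefix of every `(n+m)`-SAW from `v` lies in `A`,
then `σ_{n+m}(v) ≤ |A| ⬝ sup σ_m`. -/
lemma sigma_split_le (hlf : G.LocallyFinite) {n m : ℕ} {v : G.V}
    (A : Set (G.SAW n v)) (hA : ∀ W : G.SAW (n+m) v, W.truncTo (Nat.le_add_right n m) ∈ A) :
    (G.sigma (n+m) v : ℝ≥0∞) ≤ (Nat.card A) * G.ssigma m := by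
  classical
  haveI : ∀ (k : ℕ) (u : G.V), Finite (G.SAW k u) := saw_finite hlf
  set T := Σ w : A, G.SAW m ((w : G.SAW n v).vs (Fin.last n)) with hT
  set f : G.SAW (n+m) v → T :=
    fun W => ⟨⟨W.truncTo (Nat.le_add_right n m), hA W⟩, W.drop⟩ with hf
  have hinj : Function.Injective f := by
    intro W W' h
    have h1 : W.truncTo (Nat.le_add_right n m) = W'.truncTo (Nat.le_add_right n m) := by
      have := congrArg (fun p : T => (p.1 : G.SAW n v)) h
      exact this
    have hvs : ∀ i : Fin (m+1), W.vs ⟨n + i, by omega⟩ = W'.vs ⟨n + i, by omega⟩ := by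
      intro i
      have := congrArg (fun p : T => p.2.vs i) h
      exact this
    have hes : ∀ i : Fin m, W.es ⟨n + i, by omega⟩ = W'.es ⟨n + i, by omega⟩ := by
      intro i
      have := congrArg (fun p : T => p.2.es i) h
      exact this
    ext i
    · rcases Nat.lt_or_ge (i : ℕ) (n+1) with hi | hi
      · have h3 := congrFun (congrArg SAW.vs h1) ⟨(i:ℕ), hi⟩
        simpa [show Fin.castLE (by omega : n+1 ≤ n+m+1) ⟨(i:ℕ), hi⟩ = i from Fin.ext (by simp)]
          using h3
      · have h3 := hvs ⟨(i:ℕ) - n, by omega⟩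
        simpa [show (⟨n + ((i:ℕ) - n), by omega⟩ : Fin (n+m+1)) = i from Fin.ext (by simp; omega)]
          using h3
    · rcases Nat.lt_or_ge (i : ℕ) n with hi | hi
      · have h3 := congrFun (congrArg SAW.es h1) ⟨(i:ℕ), hi⟩
        simpa [show Fin.castLE (by omega : n ≤ n+m) ⟨(i:ℕ), hi⟩ = i from Fin.ext (by simp)]
          using h3
      · have h3 := hes ⟨(i:ℕ) - n, by omega⟩
        simpa [show (⟨n + ((i:ℕ) - n), by omega⟩ : Fin (n+m)) = i from Fin.ext (by simp; omega)]
          using h3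
  haveI : Fintype A := Fintype.ofFinite A
  haveI : ∀ w : A, Fintype (G.SAW m ((w : G.SAW n v).vs (Fin.last n))) :=
    fun w => Fintype.ofFinite _
  haveI : Finite T := by rw [hT]; infer_instance
  have hcard : G.sigma (n+m) v ≤ Nat.card T := Nat.card_le_card_of_injective f hinj
  have hTcard : (Nat.card T : ℝ≥0∞) ≤ (Nat.card A) * G.ssigma m := by
    rw [hT, Nat.card_eq_fintype_card, Fintype.card_sigma]
    push_cast
    calc (∑ w : A, (Fintype.card (G.SAW m ((w : G.SAW n v).vs (Fin.last n))) : ℝ≥0∞))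
        ≤ ∑ _w : A, G.ssigma m := by
          refine Finset.sum_le_sum fun w _ => ?_
          have : (Fintype.card (G.SAW m ((w : G.SAW n v).vs (Fin.last n))) : ℝ≥0∞)
              = G.sigma m ((w : G.SAW n v).vs (Fin.last n)) := by
            rw [sigma, Nat.card_eq_fintype_card]
          rw [this]
          exact sigma_le_ssigma _ _
      _ = (Fintype.card A) * G.ssigma m := by
          rw [Finset.sum_const, Finset.card_univ, nsmul_eq_mul]
      _ = (Nat.card A) * G.ssigma m := by rw [Nat.card_eq_fintype_card]
  calc (G.sigma (n+m) v : ℝ≥0∞) ≤ (Nat.card T : ℝ≥0∞) := by exact_mod_cast hcard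
    _ ≤ _ := hTcard

/-- Submultiplicativity of `ssigma`. -/
lemma ssigma_submul (hlf : G.LocallyFinite) (n m : ℕ) :
    G.ssigma (n+m) ≤ G.ssigma n * G.ssigma m := by
  refine iSup_le fun v => ?_
  haveI : ∀ (k : ℕ) (u : G.V), Finite (G.SAW k u) := saw_finite hlf
  have h := sigma_split_le hlf (m := m) (Set.univ : Set (G.SAW n v)) (fun W => Set.mem_univ _)
  refine h.trans ?_
  gcongr
  rw [Nat.card_coe_set_eq, Set.ncard_univ]
  exact sigma_le_ssigma n v

end Dgraph
namespace Dgraph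

variable {G : Dgraph}

/-- `w` has self-avoiding extensions of every length. -/
def Good {n : ℕ} {v : G.V} (w : G.SAW n v) : Prop :=
  ∀ N, ∀ h : n ≤ N, ∃ W : G.SAW N v, W.truncTo h = w

lemma SAW.truncTo_cast {N N' n : ℕ} {v : G.V} (hNN : N = N') (W : G.SAW N v) (h : n ≤ N)
    (h' : n ≤ N') : ((hNN ▸ W : G.SAW N' v)).truncTo h' = W.truncTo h := by
  subst hNN; rfl

lemma good_step (hlf : G.LocallyFinite) {n : ℕ} {v : G.V} {w : G.SAW n v} (hw : Good w) :
    ∃ W : G.SAW (n+1) v, W.truncTo (Nat.le_succ n) = w ∧ Good W := by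
  classical
  haveI : ∀ (k : ℕ) (u : G.V), Finite (G.SAW k u) := saw_finite hlf
  by_contra hcon
  push_neg at hcon
  have h1 : ∀ W : {W : G.SAW (n+1) v // W.truncTo (Nat.le_succ n) = w},
      ∃ N, ∃ hle : n+1 ≤ N, ∀ W' : G.SAW N v, W'.truncTo hle ≠ W.1 := by
    intro W
    have h2 := hcon W.1 W.2
    rw [Good] at h2; push_neg at h2
    exact h2
  choose NW hle hbad using h1
  haveI : Fintype {W : G.SAW (n+1) v // W.truncTo (Nat.le_succ n) = w} := Fintype.ofFinite _
  set Nstar := max (n+1) (Finset.univ.sup NW) with hNstar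
  obtain ⟨Wstar, hWstar⟩ := hw Nstar (by omega)
  set T0 : {W : G.SAW (n+1) v // W.truncTo (Nat.le_succ n) = w} :=
    ⟨Wstar.truncTo (le_max_left _ _), by
      rw [SAW.truncTo_truncTo]
      exact hWstar⟩ with hT0
  have hNle : NW T0 ≤ Nstar := le_trans (Finset.le_sup (Finset.mem_univ T0)) (le_max_right _ _)
  refine hbad T0 (Wstar.truncTo hNle) ?_
  rw [SAW.truncTo_truncTo]

lemma good_isFwdExt (hlf : G.LocallyFinite) {n : ℕ} {v : G.V} (w : G.SAW n v) (hw : Good w) :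
    G.IsFwdExt w := by
  classical
  let F : (k : ℕ) → {W : G.SAW (n+k) v // W.truncTo (Nat.le_add_right n k) = w ∧ Good W} :=
    Nat.rec ⟨w, SAW.truncTo_self w, hw⟩
      (fun k ih => ⟨(good_step hlf ih.2.2).choose, by
          rw [← SAW.truncTo_truncTo _ (Nat.le_add_right n k) (Nat.le_succ (n+k)),
            (good_step hlf ih.2.2).choose_spec.1, ih.2.1],
        (good_step hlf ih.2.2).choose_spec.2⟩)
  have hstep : ∀ k, (F (k+1)).1.truncTo (Nat.le_succ (n+k)) = (F k).1 :=
    fun k => (good_step hlf (F k).2.2).choose_spec.1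
  have compat : ∀ (j k : ℕ) (hjk : j ≤ k) (i : ℕ) (hi : i < n + j + 1),
      (F k).1.vs ⟨i, by omega⟩ = (F j).1.vs ⟨i, hi⟩ := by
    intro j k hjk
    induction k with
    | zero =>
      intro i hi
      have hj : j = 0 := by omega
      subst hj; rfl
    | succ k IH =>
      intro i hi
      by_cases hj : j = k + 1
      · subst hj; rfl
      · have hjk' : j ≤ k := by omega
        have h1 := congrFun (congrArg SAW.vs (hstep k)) (⟨i, by omega⟩ : Fin (n+k+1))
        exact h1.trans (IH hjk' i hi)
  have compates : ∀ (j k : ℕ) (hjk : j ≤ k) (i : ℕ) (hi : i < n + j),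
      (F k).1.es ⟨i, by omega⟩ = (F j).1.es ⟨i, hi⟩ := by
    intro j k hjk
    induction k with
    | zero =>
      intro i hi
      have hj : j = 0 := by omega
      subst hj; rfl
    | succ k IH =>
      intro i hi
      by_cases hj : j = k + 1
      · subst hj; rfl
      · have hjk' : j ≤ k := by omega
        have h1 := congrFun (congrArg SAW.es (hstep k)) (⟨i, by omega⟩ : Fin (n+k))
        exact h1.trans (IH hjk' i hi)
  refine ⟨fun i => (F i).1.vs ⟨i, by omega⟩, fun i => (F (i+1)).1.es ⟨i, by omega⟩, ?_, ?_, ?_, ?_⟩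
  · intro a b hab
    rcases Nat.le_total a b with h | h
    · have h1 := compat a b h a (by omega)
      have h2 := h1.trans hab
      have h3 : (⟨a, by omega⟩ : Fin (n+b+1)) = ⟨b, by omega⟩ := (F b).1.hinj h2
      exact congrArg Fin.val h3
    · have h1 := compat b a h b (by omega)
      have h2 := h1.trans hab.symm
      have h3 : (⟨b, by omega⟩ : Fin (n+a+1)) = ⟨a, by omega⟩ := (F a).1.hinj h2
      exact (congrArg Fin.val h3).symm
  · intro i
    constructor
    · exact ((F (i+1)).1.hsrc ⟨i, by omega⟩).trans (compat i (i+1) (by omega) i (by omega))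
    · exact (F (i+1)).1.htgt ⟨i, by omega⟩
  · intro i
    exact (compat 0 i (Nat.zero_le i) i.1 (by omega)).trans (congrArg w.vs (Fin.ext rfl))
  · intro i
    exact (compates 0 (i.1+1) (Nat.zero_le _) i.1 (by omega)).trans (congrArg w.es (Fin.ext rfl))

end Dgraph
namespace Dgraph

variable {G : Dgraph}

lemma exists_stab (hlf : G.LocallyFinite) (n : ℕ) (v : G.V) :
    ∃ M : ℕ, ∀ m, M ≤ m → (G.sigma (n+m) v : ℝ≥0∞) ≤ (G.sigmaF n v) * G.ssigma m := by
  classical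
  haveI : ∀ (k : ℕ) (u : G.V), Finite (G.SAW k u) := saw_finite hlf
  set A : ℕ → Set (G.SAW n v) :=
    fun m => {w | ∃ W : G.SAW (n+m) v, W.truncTo (Nat.le_add_right n m) = w} with hA
  have hanti : ∀ m m', m ≤ m' → A m' ⊆ A m := by
    intro m m' hmm w hw
    obtain ⟨W, hW⟩ := hw
    exact ⟨W.truncTo (by omega), by rw [SAW.truncTo_truncTo]; exact hW⟩
  set c : ℕ → ℕ := fun m => (A m).ncard with hc
  have hcanti : ∀ m m', m ≤ m' → c m' ≤ c m := by
    intro m m' hmm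
    exact Set.ncard_le_ncard (hanti m m' hmm) (Set.toFinite _)
  obtain ⟨M, hM⟩ : ∃ M, c M = sInf (Set.range c) := Nat.sInf_mem (Set.range_nonempty c)
  have hstable : ∀ m, M ≤ m → A m = A M := by
    intro m hm
    have h1 : c m ≤ c M := hcanti M m hm
    have h2 : c M ≤ c m := hM ▸ Nat.sInf_le ⟨m, rfl⟩
    exact Set.eq_of_subset_of_ncard_le (hanti M m hm) h2 (Set.toFinite _)
  have hgood : ∀ w ∈ A M, Good w := by
    intro w hw N hN
    have hmem : w ∈ A (N - n) := by
      rcases Nat.le_total M (N - n) with h | h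
      · rw [hstable _ h]; exact hw
      · exact hanti _ _ h hw
    obtain ⟨W, hW⟩ := hmem
    have hEq : n + (N - n) = N := by omega
    refine ⟨hEq ▸ W, ?_⟩
    exact (SAW.truncTo_cast hEq W (Nat.le_add_right n (N-n)) hN).trans hW
  have hcardF : (Nat.card (A M) : ℝ≥0∞) ≤ (G.sigmaF n v : ℝ≥0∞) := by
    have h1 : A M ⊆ {w : G.SAW n v | G.IsFwdExt w} :=
      fun w hw => good_isFwdExt hlf w (hgood w hw)
    have h2 : Nat.card (A M) ≤ Nat.card {w : G.SAW n v | G.IsFwdExt w} := by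
      simp only [Nat.card_coe_set_eq]
      exact Set.ncard_le_ncard h1 (Set.toFinite _)
    have h3 : Nat.card {w : G.SAW n v | G.IsFwdExt w} = G.sigmaF n v := rfl
    exact_mod_cast h3 ▸ h2
  refine ⟨M, fun m hm => ?_⟩
  have hsplit := sigma_split_le hlf (A m) (fun W => ⟨W, rfl⟩)
  rw [hstable m hm] at hsplit
  exact hsplit.trans (mul_le_mul_left hcardF _)

lemma sigmaF_le_ssigmaF (n : ℕ) (u : G.V) : (G.sigmaF n u : ℝ≥0∞) ≤ G.ssigmaF n :=
  le_iSup (fun w => ((G.sigmaF n w : ℝ≥0∞))) u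

/-- Uniform stabilisation over a quasi-transitive graph. -/
lemma exists_stab_uniform (hlf : G.LocallyFinite) (hqt : G.QuasiTransitive) (n : ℕ) :
    ∃ M : ℕ, ∀ m, M ≤ m → G.ssigma (n+m) ≤ G.ssigmaF n * G.ssigma m := by
  classical
  obtain ⟨S, hS⟩ := hqt
  refine ⟨S.sup (fun s => (exists_stab hlf n s).choose), fun m hm => ?_⟩
  refine iSup_le fun v => ?_
  obtain ⟨s, hsS, hs⟩ := hS v
  rw [sigma_orbit_eq hs]
  have h1 := (exists_stab hlf n s).choose_spec m
    (le_trans (Finset.le_sup (f := fun s => (exists_stab hlf n s).choose) hsS) hm)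
  refine h1.trans ?_
  exact mul_le_mul_left (sigmaF_le_ssigmaF n s) _

/-- `ssigma` is bounded (finite) in a quasi-transitive locally finite graph. -/
lemma ssigma_lt_top (hlf : G.LocallyFinite) (hqt : G.QuasiTransitive) (n : ℕ) :
    G.ssigma n < ⊤ := by
  classical
  obtain ⟨S, hS⟩ := hqt
  have hbound : G.ssigma n ≤ (S.sup (fun s => G.sigma n s) : ℕ) := by
    refine iSup_le fun v => ?_
    obtain ⟨s, hsS, hs⟩ := hS v
    rw [sigma_orbit_eq hs]
    exact_mod_cast Nat.cast_le.mpr (Finset.le_sup (f := fun s => G.sigma n s) hsS)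
  exact lt_of_le_of_lt hbound (ENNReal.natCast_lt_top _)

lemma ssigmaF_le_ssigma (hlf : G.LocallyFinite) (n : ℕ) : G.ssigmaF n ≤ G.ssigma n := by
  haveI : ∀ (k : ℕ) (u : G.V), Finite (G.SAW k u) := saw_finite hlf
  refine iSup_mono fun v => ?_
  have : G.sigmaF n v ≤ G.sigma n v := by
    rw [sigmaF, sigma]
    exact Nat.card_le_card_of_injective (fun w => w.1) Subtype.val_injective
  exact_mod_cast this

end Dgraph
namespace Dgraph

variable {G : Dgraph}

lemma saw_nonempty (hinf : Infinite G.V) (hlf : G.LocallyFinite) (hsc : G.StronglyConnected)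
    (v : G.V) (k : ℕ) : Nonempty (G.SAW k v) := by
  classical
  haveI := hinf
  -- out-balls
  set O : ℕ → Set G.V := fun j => Nat.rec ({v} : Set G.V)
    (fun _ Oj => Oj ∪ {u | ∃ w ∈ Oj, G.Adj w u}) j with hO
  have hOsucc : ∀ j, O (j+1) = O j ∪ {u | ∃ w ∈ O j, G.Adj w u} := fun j => rfl
  have hOfin : ∀ j, (O j).Finite := by
    intro j
    induction j with
    | zero => exact Set.finite_singleton v
    | succ j IH =>
      rw [hOsucc]
      refine IH.union ?_
      have hsub : {u | ∃ w ∈ O j, G.Adj w u} ⊆ G.tgt '' {e | G.src e ∈ O j} := by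
        rintro u ⟨w, hw, e, he1, he2⟩
        exact ⟨e, by show G.src e ∈ O j; rw [he1]; exact hw, he2⟩
      refine Set.Finite.subset (Set.Finite.image _ ?_) hsub
      have : {e | G.src e ∈ O j} = ⋃ w ∈ O j, {e | G.src e = w} := by
        ext e; simp
      rw [this]
      exact Set.Finite.biUnion IH (fun w _ => (hlf w).1)
  have hOmono : ∀ i j, i ≤ j → O i ⊆ O j := by
    intro i j hij
    induction j with
    | zero => have : i = 0 := by omega
              subst this; exact le_rfl
    | succ j IH =>
      rcases Nat.lt_or_ge i (j+1) with h | h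
      · refine (IH (by omega)).trans ?_
        rw [hOsucc]; exact Set.subset_union_left
      · have : i = j+1 := by omega
        subst this; exact le_rfl
  have reach : ∀ u, ∃ j, u ∈ O j := by
    intro u
    induction hsc v u with
    | refl => exact ⟨0, rfl⟩
    | tail _ hadj IH =>
      obtain ⟨j, hj⟩ := IH
      exact ⟨j+1, Or.inr ⟨_, hj, hadj⟩⟩
  set D : G.V → ℕ := fun u => sInf {j | u ∈ O j} with hD
  have hDmem : ∀ u, u ∈ O (D u) := fun u => Nat.sInf_mem (reach u)
  have hDle : ∀ u j, u ∈ O j → D u ≤ j := fun u j hj => Nat.sInf_le hj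
  have hD0 : D v = 0 := Nat.le_zero.mp (hDle v 0 rfl)
  have hDv : ∀ u, D u = 0 → u = v := by
    intro u hu
    have := hDmem u
    rw [hu] at this
    exact this
  have pred : ∀ u j, D u = j + 1 → ∃ w e, D w = j ∧ G.src e = w ∧ G.tgt e = u := by
    intro u j hu
    have h1 : u ∈ O (j+1) := by rw [← hu]; exact hDmem u
    have h2 : u ∉ O j := fun h => by have := hDle u j h; omega
    rw [hOsucc] at h1
    rcases h1 with h1 | h1
    · exact absurd h1 h2
    · obtain ⟨w, hw, e, he1, he2⟩ := h1
      have hwle : D w ≤ j := hDle w j hw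
      have hge : j ≤ D w := by
        by_contra hcon
        have : u ∈ O (D w + 1) := by
          rw [hOsucc]
          exact Or.inr ⟨w, hDmem w, e, he1, he2⟩
        have := hDle u (D w + 1) this
        omega
      exact ⟨w, e, by omega, he1, he2⟩
  have descend : ∀ m u, D u = m → ∀ j, j ≤ m → ∃ w, D w = j := by
    intro m
    induction m with
    | zero => intro u hu j hj
              have : j = 0 := by omega
              exact ⟨u, by omega⟩
    | succ m IH =>
      intro u hu j hj
      rcases Nat.lt_or_ge j (m+1) with h | h
      · obtain ⟨w, e, hw, _, _⟩ := pred u m hu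
        exact IH w hw j (by omega)
      · have : j = m+1 := by omega
        exact ⟨u, by omega⟩
  have existsD : ∀ j, ∃ u, D u = j := by
    intro j
    have hnotall : ∃ u, u ∉ O j := by
      by_contra hcon
      push_neg at hcon
      have : Set.univ = O j := (Set.eq_univ_of_forall hcon).symm
      have hfin := hOfin j
      rw [← this] at hfin
      exact Set.infinite_univ hfin
    obtain ⟨u, hu⟩ := hnotall
    have : j ≤ D u := by
      by_contra hcon
      exact hu (hOmono _ j (by omega) (hDmem u))
    exact descend (D u) u rfl j this
  have main : ∀ (m : ℕ) (u : G.V), D u = m →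
      ∃ W : G.SAW m v, (∀ i : Fin (m+1), D (W.vs i) = i) ∧ W.vs (Fin.last m) = u := by
    intro m
    induction m with
    | zero =>
      intro u hu
      refine ⟨⟨fun _ => v, fun i => i.elim0, fun i => i.elim0, fun i => i.elim0, rfl,
        fun i j _ => Fin.ext (by omega)⟩, ?_, ?_⟩
      · intro i
        have : (i : ℕ) = 0 := by omega
        rw [this, hD0]
      · exact (hDv u hu).symm
    | succ m IH =>
      intro u hu
      obtain ⟨w, e, hw, he1, he2⟩ := pred u m hu
      obtain ⟨W, hWD, hWend⟩ := IH w hw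
      have hvs : ∀ i : Fin (m+2), D ((Fin.snoc W.vs u : Fin (m+2) → G.V) i) = i := by
        intro i
        refine Fin.lastCases ?_ ?_ i
        · rw [Fin.snoc_last]
          simpa using hu
        · intro j
          rw [Fin.snoc_castSucc]
          simpa using hWD j
      refine ⟨⟨Fin.snoc W.vs u, Fin.snoc W.es e, ?_, ?_, ?_, ?_⟩, hvs, ?_⟩
      · intro i
        refine Fin.lastCases ?_ ?_ i
        · rw [Fin.snoc_last, Fin.snoc_castSucc, hWend]
          exact he1
        · intro j
          rw [Fin.snoc_castSucc, Fin.snoc_castSucc]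
          exact W.hsrc j
      · intro i
        refine Fin.lastCases ?_ ?_ i
        · rw [Fin.snoc_last, Fin.succ_last, Fin.snoc_last]
          exact he2
        · intro j
          rw [Fin.snoc_castSucc, Fin.succ_castSucc, Fin.snoc_castSucc]
          exact W.htgt j
      · rw [← Fin.castSucc_zero, Fin.snoc_castSucc]
        exact W.hstart
      · intro i j hij
        have h1 := hvs i
        have h2 := hvs j
        rw [hij] at h1
        exact Fin.ext (by omega)
      · show (Fin.snoc W.vs u : Fin (m+2) → G.V) (Fin.last (m+1)) = u
        exact Fin.snoc_last _ _
  obtain ⟨u, hu⟩ := existsD k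
  obtain ⟨W, _, _⟩ := main k u hu
  exact ⟨W⟩

end Dgraph
namespace Dgraph

variable {G : Dgraph}

lemma one_le_ssigma (hinf : Infinite G.V) (hlf : G.LocallyFinite) (hsc : G.StronglyConnected)
    (n : ℕ) : 1 ≤ G.ssigma n := by
  haveI := hinf
  obtain ⟨v⟩ := (inferInstance : Nonempty G.V)
  haveI : Finite (G.SAW n v) := saw_finite hlf n v
  haveI : Nonempty (G.SAW n v) := saw_nonempty hinf hlf hsc v n
  have h1 : 1 ≤ G.sigma n v := Nat.card_pos
  calc (1:ℝ≥0∞) ≤ (G.sigma n v : ℝ≥0∞) := by exact_mod_cast h1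
    _ ≤ _ := sigma_le_ssigma n v

end Dgraph

open Filter ENNReal Topology

theorem muF_eq_mu' (G : Dgraph) (hinf : Infinite G.V) (hlf : G.LocallyFinite)
    (hsc : G.StronglyConnected) (hqt : G.QuasiTransitive) :
    ∃ μ μF : ℝ≥0∞,
      Tendsto (fun n : ℕ => (G.ssigma n) ^ (1 / (n : ℝ))) atTop (nhds μ) ∧
      Tendsto (fun n : ℕ => (G.ssigmaF n) ^ (1 / (n : ℝ))) atTop (nhds μF) ∧
      μF = μ := by
  classical
  haveI := hinf
  set s : ℕ → ℝ := fun n => (G.ssigma n).toReal with hs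
  have hfin : ∀ n, G.ssigma n ≠ ⊤ := fun n => (Dgraph.ssigma_lt_top hlf hqt n).ne
  have hs1 : ∀ n, 1 ≤ s n := by
    intro n
    have h1 := Dgraph.one_le_ssigma hinf hlf hsc n
    have h2 : (1:ℝ≥0∞).toReal ≤ (G.ssigma n).toReal := ENNReal.toReal_mono (hfin n) h1
    simpa using h2
  have hspos : ∀ n, 0 < s n := fun n => lt_of_lt_of_le one_pos (hs1 n)
  have hsmul : ∀ n m, s (n+m) ≤ s n * s m := by
    intro n m
    have h1 := Dgraph.ssigma_submul hlf n m
    have h2 : (G.ssigma (n+m)).toReal ≤ (G.ssigma n * G.ssigma m).toReal :=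
      ENNReal.toReal_mono (ENNReal.mul_ne_top (hfin n) (hfin m)) h1
    rwa [ENNReal.toReal_mul] at h2
  set u : ℕ → ℝ := fun n => Real.log (s n) with hu
  have hu0 : ∀ n, 0 ≤ u n := fun n => Real.log_nonneg (hs1 n)
  have husub : Subadditive u := by
    intro m n
    calc Real.log (s (m+n)) ≤ Real.log (s m * s n) := Real.log_le_log (hspos _) (hsmul m n)
      _ = Real.log (s m) + Real.log (s n) := Real.log_mul (hspos m).ne' (hspos n).ne'
  have hbdd : BddBelow (Set.range fun n : ℕ => u n / n) := by
    refine ⟨0, ?_⟩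
    rintro x ⟨n, rfl⟩
    have := hu0 n
    positivity
  set L := husub.lim with hL
  have htend : Tendsto (fun n : ℕ => u n / n) atTop (𝓝 L) := husub.tendsto_lim hbdd
  have hL0 : 0 ≤ L := ge_of_tendsto' htend (fun n => by have := hu0 n; positivity)
  set mur : ℝ := Real.exp L with hmur
  have hmur1 : 1 ≤ mur := by
    rw [hmur, ← Real.exp_zero]
    exact Real.exp_le_exp.mpr hL0
  have hmurpos : 0 < mur := lt_of_lt_of_le one_pos hmur1
  have hslb : ∀ k : ℕ, k ≠ 0 → mur ^ k ≤ s k := by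
    intro k hk
    have hkpos : (0:ℝ) < k := by exact_mod_cast Nat.pos_of_ne_zero hk
    have h1 : L ≤ u k / k := husub.lim_le_div hbdd hk
    rw [le_div_iff₀ hkpos] at h1
    have h2 : Real.exp (L * k) ≤ Real.exp (u k) := Real.exp_le_exp.mpr h1
    rw [mul_comm, Real.exp_nat_mul] at h2
    rw [hmur]
    have h3 : Real.exp (u k) = s k := Real.exp_log (hspos k)
    rw [h3] at h2
    exact h2
  have hsroot : Tendsto (fun n : ℕ => s n ^ (1/(n:ℝ))) atTop (𝓝 mur) := by
    have h1 : Tendsto (fun n : ℕ => Real.exp (u n / n)) atTop (𝓝 (Real.exp L)) :=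
      (Real.continuous_exp.tendsto L).comp htend
    refine Tendsto.congr' ?_ h1
    filter_upwards [eventually_ge_atTop 1] with n hn
    show Real.exp (Real.log (s n) / (n:ℝ)) = s n ^ (1/(n:ℝ))
    rw [Real.rpow_def_of_pos (hspos n), mul_one_div]
  set μ : ℝ≥0∞ := ENNReal.ofReal mur with hμ
  have htendE : Tendsto (fun n : ℕ => (G.ssigma n) ^ (1/(n:ℝ))) atTop (𝓝 μ) := by
    have h1 : Tendsto (fun n : ℕ => ENNReal.ofReal (s n ^ (1/(n:ℝ)))) atTop (𝓝 μ) :=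
      (ENNReal.continuous_ofReal.tendsto mur).comp hsroot
    refine Tendsto.congr ?_ h1
    intro n
    rw [← ENNReal.ofReal_rpow_of_pos (hspos n), ENNReal.ofReal_toReal (hfin n)]
  have hsFle' : ∀ n, G.ssigmaF n ≤ G.ssigma n := Dgraph.ssigmaF_le_ssigma hlf
  have hFfin : ∀ n, G.ssigmaF n ≠ ⊤ :=
    fun n => (lt_of_le_of_lt (hsFle' n) (Dgraph.ssigma_lt_top hlf hqt n)).ne
  set sF : ℕ → ℝ := fun n => (G.ssigmaF n).toReal with hsF
  have hsFle : ∀ n, sF n ≤ s n := fun n => ENNReal.toReal_mono (hfin n) (hsFle' n)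
  have hsF0 : ∀ n, 0 ≤ sF n := fun n => ENNReal.toReal_nonneg
  have hkey : ∀ n : ℕ, n ≠ 0 → ∀ ε : ℝ, 0 < ε → ε < mur → (mur - ε)^n ≤ sF n := by
    intro n hn ε hε hεμ
    set c : ℝ := mur - ε with hc
    have hcpos : 0 < c := by rw [hc]; linarith
    obtain ⟨M, hM⟩ := Dgraph.exists_stab_uniform hlf hqt n
    have hex : ∃ m, M ≤ m ∧ c^n * s m ≤ s (n+m) := by
      by_contra hcon
      push_neg at hcon
      have hiter : ∀ j : ℕ, s (M + j*n) ≤ (c^n)^j * s M := by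
        intro j
        induction j with
        | zero => simp
        | succ j IH =>
          have h1 := hcon (M + j*n) (by omega)
          have h2 : M + (j+1)*n = n + (M + j*n) := by ring
          rw [h2]
          have hcn : (0:ℝ) ≤ c^n := by positivity
          calc s (n + (M + j*n)) ≤ c^n * s (M + j*n) := le_of_lt h1
            _ ≤ c^n * ((c^n)^j * s M) := by nlinarith [IH, hcn]
            _ = (c^n)^(j+1) * s M := by ring
      have hbound : ∀ j : ℕ, 1 ≤ j → (mur/c)^(j*n) ≤ s M / mur^M := by
        intro j hj
        have hjn : 1 ≤ j*n := Nat.one_le_iff_ne_zero.mpr (Nat.mul_ne_zero (by omega) hn)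
        have h1 : mur ^ (M + j*n) ≤ s (M + j*n) := hslb _ (by omega)
        have h2 : s (M + j*n) ≤ c^(j*n) * s M := by
          have h3 := hiter j
          rw [← pow_mul, Nat.mul_comm n j] at h3
          exact h3
        have h4 : mur^M * mur^(j*n) ≤ c^(j*n) * s M := by
          rw [← pow_add]; exact h1.trans h2
        rw [div_pow, div_le_div_iff₀ (by positivity) (by positivity)]
        nlinarith [h4]
      have hratio : 1 < mur / c := by
        rw [lt_div_iff₀ hcpos]; linarith
      have hgrow : Tendsto (fun k : ℕ => (mur/c)^k) atTop atTop :=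
        tendsto_pow_atTop_atTop_of_one_lt hratio
      have hmulT : Tendsto (fun j : ℕ => j*n) atTop atTop := by
        refine tendsto_atTop_atTop.mpr fun b => ⟨b, fun a ha => ?_⟩
        calc b ≤ a := ha
          _ ≤ a * n := Nat.le_mul_of_pos_right a (Nat.pos_of_ne_zero hn)
      have hcomp : Tendsto (fun j : ℕ => (mur/c)^(j*n)) atTop atTop := hgrow.comp hmulT
      obtain ⟨j, hj1, hj2⟩ :=
        ((hcomp.eventually_gt_atTop (s M / mur^M)).and (eventually_ge_atTop 1)).exists
      exact absurd (hbound j hj2) (not_le.mpr hj1)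
    obtain ⟨m, hmM, hm⟩ := hex
    have h2 := hM m hmM
    have h3 : s (n+m) ≤ sF n * s m := by
      have h4 : (G.ssigma (n+m)).toReal ≤ (G.ssigmaF n * G.ssigma m).toReal :=
        ENNReal.toReal_mono (ENNReal.mul_ne_top (hFfin n) (hfin m)) h2
      rwa [ENNReal.toReal_mul] at h4
    have h5 : c^n * s m ≤ sF n * s m := hm.trans h3
    exact le_of_mul_le_mul_right h5 (hspos m)
  have hkey2 : ∀ n : ℕ, n ≠ 0 → mur ≤ sF n ^ (1/(n:ℝ)) := by
    intro n hn
    have hstep : ∀ ε : ℝ, 0 < ε → mur - ε ≤ sF n ^ (1/(n:ℝ)) := by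
      intro ε hε
      rcases le_or_gt mur ε with h | h
      · calc mur - ε ≤ 0 := by linarith
          _ ≤ _ := Real.rpow_nonneg (hsF0 n) _
      · have h1 := hkey n hn ε hε h
        have hsub0 : (0:ℝ) ≤ mur - ε := by linarith
        have h2 : ((mur - ε)^n : ℝ) ^ (1/(n:ℝ)) ≤ sF n ^ (1/(n:ℝ)) :=
          Real.rpow_le_rpow (by positivity) h1 (by positivity)
        have hne : (n:ℝ) ≠ 0 := by exact_mod_cast hn
        rwa [← Real.rpow_natCast (mur - ε) n, ← Real.rpow_mul hsub0, mul_one_div,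
          div_self hne, Real.rpow_one] at h2
    refine le_of_forall_pos_le_add fun ε hε => ?_
    have := hstep ε hε
    linarith
  have hsFpos : ∀ n : ℕ, n ≠ 0 → 0 < sF n := by
    intro n hn
    rcases lt_or_ge 0 (sF n) with h | h
    · exact h
    · exfalso
      have h0 : sF n = 0 := le_antisymm h (hsF0 n)
      have h1 := hkey2 n hn
      have hne : (1/(n:ℝ)) ≠ 0 := by
        have : (n:ℝ) ≠ 0 := by exact_mod_cast hn
        positivity
      rw [h0, Real.zero_rpow hne] at h1
      linarith
  have hup : ∀ n, sF n ^ (1/(n:ℝ)) ≤ s n ^ (1/(n:ℝ)) := fun n =>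
    Real.rpow_le_rpow (hsF0 n) (hsFle n) (by positivity)
  have hsFroot : Tendsto (fun n : ℕ => sF n ^ (1/(n:ℝ))) atTop (𝓝 mur) := by
    refine tendsto_of_tendsto_of_tendsto_of_le_of_le' tendsto_const_nhds hsroot ?_ ?_
    · filter_upwards [eventually_ge_atTop 1] with n hn
      exact hkey2 n (by omega)
    · filter_upwards with n
      exact hup n
  have htendF : Tendsto (fun n : ℕ => (G.ssigmaF n) ^ (1/(n:ℝ))) atTop (𝓝 μ) := by
    have h1 : Tendsto (fun n : ℕ => ENNReal.ofReal (sF n ^ (1/(n:ℝ)))) atTop (𝓝 μ) :=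
      (ENNReal.continuous_ofReal.tendsto mur).comp hsFroot
    refine Tendsto.congr' ?_ h1
    filter_upwards [eventually_ge_atTop 1] with n hn
    rw [← ENNReal.ofReal_rpow_of_pos (hsFpos n (by omega)), ENNReal.ofReal_toReal (hFfin n)]
  exact ⟨μ, μ, htendE, htendF, rfl⟩
open Filter ENNReal

/-- the limits `μ^F` and `μ` exist and `μ^F = μ`. -/
theorem muF_eq_mu (G : Dgraph) (hinf : Infinite G.V) (hlf : G.LocallyFinite)
    (hsc : G.StronglyConnected) (hqt : G.QuasiTransitive) :
    ∃ μ μF : ℝ≥0∞,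
      Tendsto (fun n : ℕ => (G.ssigma n) ^ (1 / (n : ℝ))) atTop (nhds μ) ∧
      Tendsto (fun n : ℕ => (G.ssigmaF n) ^ (1 / (n : ℝ))) atTop (nhds μF) ∧
      μF = μ := by
  exact muF_eq_mu' G hinf hlf hsc hqt
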